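/- arXiv:2302.11174 — 2 statements merged into one kernel-verified Lean document; each statement's English description precedes it below -/
import Mathlib

section
/- If a shift-invariant kernel k satisfies the Bochner representation k(x, x') = E[cos(⟨x − x', W⟩)] for W ∼ ρ, and Z(x) = √2·cos(⟨x, W⟩ + U) with U uniform on [0, 2π] independent of W, then the random feature approximation is unbiased: E[Z(x)Z(x')] = k(x, x') for all x, x' ∈ ℝ^d. -/
open MeasureTheory Real ProbabilityTheory

open scoped RealInnerProductSpace

lemma inner_cos_zero (c : ℝ) : ∫ u in Set.Icc (0:ℝ) (2*π), Real.cos (c + 2*u) = 0 := by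
  rw [MeasureTheory.integral_Icc_eq_integral_Ioc,
    ← intervalIntegral.integral_of_le (by positivity)]
  simp_rw [add_comm c]
  rw [intervalIntegral.integral_comp_mul_add Real.cos two_ne_zero c]
  rw [integral_cos]
  have h1 : 2*(2*π)+c = (c + 2*π) + 2*π := by ring
  have h2 : 2*(0:ℝ)+c = c := by ring
  rw [h1, h2, Real.sin_add_two_pi, Real.sin_add_two_pi]
  simp

lemma integrable_cos_comp {α : Type*} [MeasurableSpace α] (ν : Measure α) [IsFiniteMeasure ν]
    {f : α → ℝ} (hf : Measurable f) : Integrable (fun a => Real.cos (f a)) ν := by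
  refine Integrable.mono' (integrable_const 1)
    (Real.measurable_cos.comp hf).aestronglyMeasurable
    (Filter.Eventually.of_forall fun a => ?_)
  simpa using Real.abs_cos_le_one (f a)

/-- If `k(x,x') = E[cos ⟨x - x', W⟩]` (Bochner representation) and
`Z(x) = √2 cos(⟨x,W⟩ + U)` with `U` uniform on `[0,2π]` independent of `W`, then
the random feature approximation is unbiased: `E[Z(x) Z(x')] = k(x,x')`. -/
theorem random_features_unbiased
    {Ω : Type*} [MeasurableSpace Ω] (μ : Measure Ω) [IsProbabilityMeasure μ]
    {d : ℕ} (W : Ω → EuclideanSpace ℝ (Fin d)) (U : Ω → ℝ)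
    (hW : Measurable W) (hUm : Measurable U)
    (hU : Measure.map U μ
      = (ENNReal.ofReal (2 * π))⁻¹ • volume.restrict (Set.Icc 0 (2 * π)))
    (hindep : IndepFun W U μ)
    (k : EuclideanSpace ℝ (Fin d) → EuclideanSpace ℝ (Fin d) → ℝ)
    (hk : ∀ x x', k x x' = ∫ ω, Real.cos ⟪x - x', W ω⟫ ∂μ)
    (Z : EuclideanSpace ℝ (Fin d) → Ω → ℝ)
    (hZ : ∀ x ω, Z x ω = Real.sqrt 2 * Real.cos (⟪x, W ω⟫ + U ω))
    (x x' : EuclideanSpace ℝ (Fin d)) :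
    ∫ ω, Z x ω * Z x' ω ∂μ = k x x' := by
  have hax : Measurable fun ω => (⟪x, W ω⟫ : ℝ) := measurable_const.inner hW
  have hbx : Measurable fun ω => (⟪x', W ω⟫ : ℝ) := measurable_const.inner hW
  have hpt : ∀ ω, Z x ω * Z x' ω
      = Real.cos ⟪x - x', W ω⟫ + Real.cos (⟪x, W ω⟫ + ⟪x', W ω⟫ + 2 * U ω) := by
    intro ω
    rw [hZ, hZ, inner_sub_left]
    have h2 : Real.sqrt 2 * Real.sqrt 2 = 2 := Real.mul_self_sqrt (by norm_num)
    have e : ∀ p q : ℝ, 2 * (Real.cos p * Real.cos q) = Real.cos (p - q) + Real.cos (p + q) := by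
      intro p q; rw [Real.cos_sub, Real.cos_add]; ring
    have := e (⟪x, W ω⟫ + U ω) (⟪x', W ω⟫ + U ω)
    have hd : (⟪x, W ω⟫ + U ω) - (⟪x', W ω⟫ + U ω) = ⟪x, W ω⟫ - ⟪x', W ω⟫ := by ring
    have hs : (⟪x, W ω⟫ + U ω) + (⟪x', W ω⟫ + U ω) = ⟪x, W ω⟫ + ⟪x', W ω⟫ + 2 * U ω := by ring
    rw [hd, hs] at this
    linear_combination this + Real.cos (⟪x, W ω⟫ + U ω) * Real.cos (⟪x', W ω⟫ + U ω) * h2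
  calc ∫ ω, Z x ω * Z x' ω ∂μ
      = ∫ ω, (Real.cos ⟪x - x', W ω⟫
          + Real.cos (⟪x, W ω⟫ + ⟪x', W ω⟫ + 2 * U ω)) ∂μ := by
        exact integral_congr_ae (Filter.Eventually.of_forall hpt)
    _ = (∫ ω, Real.cos ⟪x - x', W ω⟫ ∂μ)
          + ∫ ω, Real.cos (⟪x, W ω⟫ + ⟪x', W ω⟫ + 2 * U ω) ∂μ := by
        exact integral_add (integrable_cos_comp μ (measurable_const.inner hW))
          (integrable_cos_comp μ ((hax.add hbx).add (hUm.const_mul 2)))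
    _ = k x x' := by
        rw [hk]
        have hz : ∫ ω, Real.cos (⟪x, W ω⟫ + ⟪x', W ω⟫ + 2 * U ω) ∂μ = 0 := by
          have hmap : Measure.map (fun ω => (W ω, U ω)) μ
              = (Measure.map W μ).prod (Measure.map U μ) :=
            (indepFun_iff_map_prod_eq_prod_map_map hW.aemeasurable hUm.aemeasurable).mp hindep
          haveI : IsProbabilityMeasure (Measure.map W μ) :=
            Measure.isProbabilityMeasure_map hW.aemeasurable
          haveI : IsProbabilityMeasure (Measure.map U μ) :=
            Measure.isProbabilityMeasure_map hUm.aemeasurable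
          have hGm : Measurable fun p : EuclideanSpace ℝ (Fin d) × ℝ =>
              (⟪x, p.1⟫ + ⟪x', p.1⟫ + 2 * p.2 : ℝ) :=
            ((measurable_const.inner measurable_fst).add
              (measurable_const.inner measurable_fst)).add (measurable_snd.const_mul 2)
          have hFm : Measurable fun p : EuclideanSpace ℝ (Fin d) × ℝ =>
              Real.cos (⟪x, p.1⟫ + ⟪x', p.1⟫ + 2 * p.2) := Real.measurable_cos.comp hGm
          have h1 : ∫ ω, Real.cos (⟪x, W ω⟫ + ⟪x', W ω⟫ + 2 * U ω) ∂μ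
              = ∫ p : EuclideanSpace ℝ (Fin d) × ℝ,
                  Real.cos (⟪x, p.1⟫ + ⟪x', p.1⟫ + 2 * p.2)
                  ∂((Measure.map W μ).prod (Measure.map U μ)) := by
            rw [← hmap, integral_map (hW.prodMk hUm).aemeasurable hFm.aestronglyMeasurable]
          rw [h1, integral_prod _ (integrable_cos_comp _ hGm)]
          have h2 : ∀ w : EuclideanSpace ℝ (Fin d),
              ∫ u, Real.cos (⟪x, w⟫ + ⟪x', w⟫ + 2 * u) ∂(Measure.map U μ) = 0 := by
            intro w
            rw [hU, integral_smul_measure]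
            rw [inner_cos_zero (⟪x, w⟫ + ⟪x', w⟫)]
            simp
          simp only [h2, integral_zero]
        rw [hz, add_zero]
end

section
/- Let Z(x) = √2·cos(⟨x, W⟩ + U) with U uniform on [0, 2π] independent of W, and let k(x,x') = E[Z(x)Z(x')]. Then for all x, x' ∈ ℝ^d, Var(Z(x)Z(x')) ≥ 1/2. -/
open MeasureTheory Real ProbabilityTheory

open scoped RealInnerProductSpace

lemma rf_int_bdd {α : Type*} [MeasurableSpace α] (m : Measure α) [IsFiniteMeasure m]
    {f : α → ℝ} (hf : AEStronglyMeasurable f m) (C : ℝ) (h : ∀ a, ‖f a‖ ≤ C) :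
    Integrable f m :=
  Integrable.mono' (integrable_const C) hf (Filter.Eventually.of_forall h)

lemma rf_intInt_cos (c : ℝ) :
    ∫ u in (0:ℝ)..(2*π), Real.cos (c + 2*u) = 0 := by
  have hderiv : ∀ u ∈ Set.uIcc (0:ℝ) (2*π),
      HasDerivAt (fun v => Real.sin (c + 2*v) / 2) (Real.cos (c + 2*u)) u := by
    intro u _
    have h1 : HasDerivAt (fun v : ℝ => c + 2*v) 2 u := by
      simpa using ((hasDerivAt_id u).const_mul 2).const_add c
    have h2 := ((Real.hasDerivAt_sin (c + 2*u)).comp u h1).div_const 2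
    exact h2.congr_deriv (by ring)
  rw [intervalIntegral.integral_eq_sub_of_hasDerivAt hderiv
    ((by continuity : Continuous fun u : ℝ => Real.cos (c + 2*u)).intervalIntegrable 0 (2*π))]
  have : Real.sin (c + 2*(2*π)) = Real.sin c := by
    rw [show c + 2*(2*π) = (c + 2*π) + 2*π by ring, Real.sin_add_two_pi, Real.sin_add_two_pi]
  rw [this]
  norm_num

lemma rf_intInt_cos_sq (c : ℝ) :
    ∫ u in (0:ℝ)..(2*π), Real.cos (c + 2*u) ^ 2 = π := by
  have hderiv : ∀ u ∈ Set.uIcc (0:ℝ) (2*π),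
      HasDerivAt (fun v => v/2 + Real.sin (2*c + 4*v) / 8) (Real.cos (c + 2*u) ^ 2) u := by
    intro u _
    have h1 : HasDerivAt (fun v : ℝ => 2*c + 4*v) 4 u := by
      simpa using ((hasDerivAt_id u).const_mul 4).const_add (2*c)
    have h2 := ((Real.hasDerivAt_sin (2*c + 4*u)).comp u h1).div_const 8
    have h3 := ((hasDerivAt_id u).div_const 2).add h2
    have heq : Real.cos (c + 2*u) ^ 2 = 1/2 + Real.cos (2*c + 4*u) / 2 := by
      rw [Real.cos_sq, show (2:ℝ)*(c+2*u) = 2*c + 4*u by ring]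
    rw [heq]
    exact h3.congr_deriv (by ring)
  rw [intervalIntegral.integral_eq_sub_of_hasDerivAt hderiv
    ((by continuity : Continuous fun u : ℝ => Real.cos (c + 2*u) ^ 2).intervalIntegrable 0 (2*π))]
  have : Real.sin (2*c + 4*(2*π)) = Real.sin (2*c) := by
    rw [show 2*c + 4*(2*π) = (2*c : ℝ) + (4:ℤ) * (2*π) by push_cast; ring,
      Real.sin_add_int_mul_two_pi]
  rw [this]
  ring_nf

lemma rf_unif_cos (c : ℝ) :
    ∫ u, Real.cos (c + 2*u)
      ∂((ENNReal.ofReal (2 * π))⁻¹ • volume.restrict (Set.Icc 0 (2 * π))) = 0 := by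
  rw [integral_smul_measure]
  have h : ∫ u in Set.Icc (0:ℝ) (2*π), Real.cos (c + 2*u) = 0 := by
    rw [MeasureTheory.integral_Icc_eq_integral_Ioc,
      ← intervalIntegral.integral_of_le (by positivity : (0:ℝ) ≤ 2*π)]
    exact rf_intInt_cos c
  rw [h]
  simp

lemma rf_unif_cos_sq (c : ℝ) :
    ∫ u, Real.cos (c + 2*u) ^ 2
      ∂((ENNReal.ofReal (2 * π))⁻¹ • volume.restrict (Set.Icc 0 (2 * π))) = 1/2 := by
  rw [integral_smul_measure]
  have h : ∫ u in Set.Icc (0:ℝ) (2*π), Real.cos (c + 2*u) ^ 2 = π := by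
    rw [MeasureTheory.integral_Icc_eq_integral_Ioc,
      ← intervalIntegral.integral_of_le (by positivity : (0:ℝ) ≤ 2*π)]
    exact rf_intInt_cos_sq c
  rw [h, smul_eq_mul, ENNReal.toReal_inv, ENNReal.toReal_ofReal (by positivity)]
  field_simp

/-- For `Z(x) = √2 cos(⟨x,W⟩ + U)` with `U` uniform on `[0,2π]` independent of `W`,
and `k(x,x') = E[Z(x) Z(x')]`, the variance `E[Y²] - (E[Y])²` of `Y = Z(x) Z(x')`
is at least `1/2`. -/
theorem variance_random_features_product_ge_half
    {Ω : Type*} [MeasurableSpace Ω] (μ : Measure Ω) [IsProbabilityMeasure μ]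
    {d : ℕ} (W : Ω → EuclideanSpace ℝ (Fin d)) (U : Ω → ℝ)
    (hW : Measurable W) (hUm : Measurable U)
    (hU : Measure.map U μ
      = (ENNReal.ofReal (2 * π))⁻¹ • volume.restrict (Set.Icc 0 (2 * π)))
    (hindep : IndepFun W U μ)
    (Z : EuclideanSpace ℝ (Fin d) → Ω → ℝ)
    (hZ : ∀ x ω, Z x ω = Real.sqrt 2 * Real.cos (⟪x, W ω⟫ + U ω))
    (k : EuclideanSpace ℝ (Fin d) → EuclideanSpace ℝ (Fin d) → ℝ)
    (hk : ∀ x x', k x x' = ∫ ω, Z x ω * Z x' ω ∂μ)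
    (x x' : EuclideanSpace ℝ (Fin d)) :
    (∫ ω, (Z x ω * Z x' ω) ^ 2 ∂μ) - (∫ ω, Z x ω * Z x' ω ∂μ) ^ 2 ≥ 1 / 2 := by
  have hIPU : IsProbabilityMeasure (μ.map U) := Measure.isProbabilityMeasure_map hUm.aemeasurable
  have hIPW : IsProbabilityMeasure (μ.map W) := Measure.isProbabilityMeasure_map hW.aemeasurable
  have hmap : μ.map (fun ω => (W ω, U ω)) = (μ.map W).prod (μ.map U) :=
    (indepFun_iff_map_prod_eq_prod_map_map hW.aemeasurable hUm.aemeasurable).mp hindep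
  set g : EuclideanSpace ℝ (Fin d) × ℝ → ℝ :=
    fun p => Real.cos ⟪x - x', p.1⟫ + Real.cos (⟪x + x', p.1⟫ + 2 * p.2) with hg
  have hgc : Continuous g := by
    apply Continuous.add
    · exact Real.continuous_cos.comp (Continuous.inner continuous_const continuous_fst)
    · exact Real.continuous_cos.comp ((Continuous.inner continuous_const continuous_fst).add
        (continuous_const.mul continuous_snd))
  have hgbd : ∀ p, ‖g p‖ ≤ 2 := by
    intro p
    calc ‖g p‖ ≤ |Real.cos ⟪x - x', p.1⟫| + |Real.cos (⟪x + x', p.1⟫ + 2 * p.2)| := abs_add_le _ _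
    _ ≤ 1 + 1 := add_le_add (Real.abs_cos_le_one _) (Real.abs_cos_le_one _)
    _ = 2 := by norm_num
  have hpt : ∀ ω, Z x ω * Z x' ω = g (W ω, U ω) := by
    intro ω
    have h2 : Real.sqrt 2 * Real.sqrt 2 = 2 := Real.mul_self_sqrt (by norm_num)
    have e1 : ⟪x - x', W ω⟫ = (⟪x, W ω⟫ + U ω) - (⟪x', W ω⟫ + U ω) := by
      rw [inner_sub_left]; ring
    have e2 : ⟪x + x', W ω⟫ + 2 * U ω = (⟪x, W ω⟫ + U ω) + (⟪x', W ω⟫ + U ω) := by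
      rw [inner_add_left]; ring
    have e3 : g (W ω, U ω)
        = Real.cos ((⟪x, W ω⟫ + U ω) - (⟪x', W ω⟫ + U ω))
          + Real.cos ((⟪x, W ω⟫ + U ω) + (⟪x', W ω⟫ + U ω)) := by
      simp only [hg]
      rw [e1, e2]
    have key : ∀ A B : ℝ, Real.sqrt 2 * Real.cos A * (Real.sqrt 2 * Real.cos B)
        = Real.cos (A - B) + Real.cos (A + B) := by
      intro A B
      rw [Real.cos_sub, Real.cos_add]
      linear_combination Real.cos A * Real.cos B * h2
    rw [e3, hZ, hZ]
    exact key _ _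
  -- transfer to product measure
  have hmeas_pair : AEMeasurable (fun ω => (W ω, U ω)) μ := (hW.prodMk hUm).aemeasurable
  have t1 : ∫ ω, Z x ω * Z x' ω ∂μ = ∫ p, g p ∂((μ.map W).prod (μ.map U)) := by
    rw [← hmap, integral_map hmeas_pair hgc.aestronglyMeasurable]
    exact integral_congr_ae (Filter.Eventually.of_forall hpt)
  have t2 : ∫ ω, (Z x ω * Z x' ω) ^ 2 ∂μ
      = ∫ p, g p ^ 2 ∂((μ.map W).prod (μ.map U)) := by
    rw [← hmap, integral_map hmeas_pair (f := fun p => g p ^ 2) (hgc.pow 2).aestronglyMeasurable]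
    refine integral_congr_ae (Filter.Eventually.of_forall fun ω => ?_)
    dsimp only
    rw [hpt ω]
  haveI : IsProbabilityMeasure
      ((ENNReal.ofReal (2 * π))⁻¹ • volume.restrict (Set.Icc 0 (2 * π))) := hU ▸ hIPU
  have hint1 : Integrable g ((μ.map W).prod (μ.map U)) :=
    rf_int_bdd _ hgc.aestronglyMeasurable 2 hgbd
  have hint2 : Integrable (fun p => g p ^ 2) ((μ.map W).prod (μ.map U)) := by
    refine rf_int_bdd _ (hgc.pow 2).aestronglyMeasurable 4 fun p => ?_
    have := hgbd p
    rw [Real.norm_eq_abs] at this ⊢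
    rw [abs_pow]
    nlinarith [abs_nonneg (g p)]
  -- inner integrals
  have inner1 : ∀ w : EuclideanSpace ℝ (Fin d),
      ∫ u, g (w, u) ∂(μ.map U) = Real.cos ⟪x - x', w⟫ := by
    intro w
    have hc1 : Continuous fun u : ℝ => Real.cos (⟪x + x', w⟫ + 2 * u) :=
      Real.continuous_cos.comp (continuous_const.add (continuous_const.mul continuous_id))
    simp only [hg]
    rw [hU, integral_add (integrable_const _)
      (rf_int_bdd _ hc1.aestronglyMeasurable 1 fun u => by
        rw [Real.norm_eq_abs]; exact Real.abs_cos_le_one _),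
      integral_const, rf_unif_cos]
    simp
    rw [ENNReal.toReal_ofReal pi_pos.le, max_eq_left (by positivity)]
    field_simp
  have inner2 : ∀ w : EuclideanSpace ℝ (Fin d),
      ∫ u, g (w, u) ^ 2 ∂(μ.map U) = Real.cos ⟪x - x', w⟫ ^ 2 + 1/2 := by
    intro w
    have hc1 : Continuous fun u : ℝ => Real.cos (⟪x + x', w⟫ + 2 * u) :=
      Real.continuous_cos.comp (continuous_const.add (continuous_const.mul continuous_id))
    have hc2 : Continuous fun u : ℝ => Real.cos (⟪x + x', w⟫ + 2 * u) ^ 2 := hc1.pow 2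
    have hb1 : Integrable (fun u : ℝ => Real.cos (⟪x + x', w⟫ + 2 * u))
        ((ENNReal.ofReal (2 * π))⁻¹ • volume.restrict (Set.Icc 0 (2 * π))) :=
      rf_int_bdd _ hc1.aestronglyMeasurable 1 fun u => by
        rw [Real.norm_eq_abs]; exact Real.abs_cos_le_one _
    have hb2 : Integrable (fun u : ℝ => Real.cos (⟪x + x', w⟫ + 2 * u) ^ 2)
        ((ENNReal.ofReal (2 * π))⁻¹ • volume.restrict (Set.Icc 0 (2 * π))) := by
      refine rf_int_bdd _ hc2.aestronglyMeasurable 1 fun u => ?_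
      rw [Real.norm_eq_abs, abs_pow]
      have := Real.abs_cos_le_one (⟪x + x', w⟫ + 2 * u)
      nlinarith [abs_nonneg (Real.cos (⟪x + x', w⟫ + 2 * u))]
    simp only [hg]
    have expand : ∀ u : ℝ, (Real.cos ⟪x - x', w⟫ + Real.cos (⟪x + x', w⟫ + 2 * u)) ^ 2
        = Real.cos ⟪x - x', w⟫ ^ 2
          + ((2 * Real.cos ⟪x - x', w⟫) * Real.cos (⟪x + x', w⟫ + 2 * u)
            + Real.cos (⟪x + x', w⟫ + 2 * u) ^ 2) := by
      intro u; ring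
    have hb3 : Integrable (fun u : ℝ => (2 * Real.cos ⟪x - x', w⟫) * Real.cos (⟪x + x', w⟫ + 2 * u)
        + Real.cos (⟪x + x', w⟫ + 2 * u) ^ 2)
        ((ENNReal.ofReal (2 * π))⁻¹ • volume.restrict (Set.Icc 0 (2 * π))) :=
      (hb1.const_mul _).add hb2
    simp only [expand]
    rw [hU, integral_add (integrable_const _) hb3,
      integral_const, integral_add (hb1.const_mul _) hb2, integral_const_mul,
      rf_unif_cos, rf_unif_cos_sq]
    simp
    rw [ENNReal.toReal_ofReal pi_pos.le, max_eq_left (by positivity)]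
    field_simp
  -- Fubini
  have T1 : ∫ ω, Z x ω * Z x' ω ∂μ = ∫ w, Real.cos ⟪x - x', w⟫ ∂(μ.map W) := by
    rw [t1, integral_prod _ hint1]
    exact integral_congr_ae (Filter.Eventually.of_forall fun w => inner1 w)
  have T2 : ∫ ω, (Z x ω * Z x' ω) ^ 2 ∂μ
      = (∫ w, Real.cos ⟪x - x', w⟫ ^ 2 ∂(μ.map W)) + 1/2 := by
    rw [t2, integral_prod _ hint2]
    have := integral_congr_ae (μ := μ.map W)
      (Filter.Eventually.of_forall fun w => inner2 w)
    rw [this, integral_add _ (integrable_const _), integral_const]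
    · simp
    · refine rf_int_bdd _ ((Real.continuous_cos.comp
        (Continuous.inner continuous_const continuous_id)).pow 2).aestronglyMeasurable
        1 fun w => ?_
      rw [Real.norm_eq_abs, abs_pow]
      have := Real.abs_cos_le_one ⟪x - x', w⟫
      nlinarith [abs_nonneg (Real.cos ⟪x - x', w⟫)]
  -- Jensen via variance
  set f : EuclideanSpace ℝ (Fin d) → ℝ := fun w => Real.cos ⟪x - x', w⟫ with hf
  have hfc : Continuous f :=
    Real.continuous_cos.comp (Continuous.inner continuous_const continuous_id)
  have hmem : MemLp f 2 (μ.map W) :=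
    (memLp_top_of_bound hfc.aestronglyMeasurable 1
      (Filter.Eventually.of_forall fun w => by
        rw [Real.norm_eq_abs]; exact Real.abs_cos_le_one _)).mono_exponent le_top
  have hvar := variance_nonneg f (μ.map W)
  rw [variance_eq_sub hmem] at hvar
  simp only [Pi.pow_apply] at hvar
  rw [T1, T2]
  have : (∫ w, Real.cos ⟪x - x', w⟫ ∂(μ.map W)) ^ 2
      ≤ ∫ w, Real.cos ⟪x - x', w⟫ ^ 2 ∂(μ.map W) := by
    simpa [hf] using hvar
  linarith
end
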